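/- Let M : {-1,+1}^m → [-1,+1]^m satisfy (ε,δ)-DP, S uniform on {-1,+1}^m, T = M(S). Let g : [-1,1]^m × [0,1] → ℝ satisfy: for all t and all γ ∈ [0,1], P[∑_i |t_i|·Š_i ≥ g(t,γ)] ≤ γ where Š ~ Bernoulli(e^ε/(e^ε+1))^m. Then for all γ ∈ [0,1] and τ > 0, P[∑_i max{0, T_i·S_i} ≥ g(T,γ) + τ] ≤ γ + 2mδ/τ. -/

import Mathlib

open MeasureTheory ProbabilityTheory Real

def sgn (b : Bool) : ℝ := if b then 1 else -1

def Adjacent {m : ℕ} (s s' : Fin m → Bool) : Prop := ∃ j, ∀ i, i ≠ j → s i = s' i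

def ApproxDP {m : ℕ} (M : (Fin m → Bool) → Measure (Fin m → ℝ)) (ε δ : ℝ) : Prop :=
  ∀ s s', Adjacent s s' → ∀ A : Set (Fin m → ℝ), MeasurableSet A →
    M s A ≤ ENNReal.ofReal (exp ε) * M s' A + ENNReal.ofReal δ

def bernVecPr {m : ℕ} (q : ℝ) (sh : Fin m → Bool) : ℝ :=
  ∏ i, if sh i then q else 1 - q

namespace AuditAux

variable {m : ℕ}

/-- sum of selected |t i|. -/
def dotp (t : Fin m → ℝ) (sh : Fin m → Bool) : ℝ := ∑ i, if sh i then |t i| else 0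

noncomputable def strictTail (qb : ℝ) (t : Fin m → ℝ) (y : ℝ) : ℝ :=
  ∑ sh : Fin m → Bool, bernVecPr qb sh * (if y < dotp t sh then 1 else 0)

noncomputable def qfun (qb γ : ℝ) (t : Fin m → ℝ) : ℝ :=
  Finset.inf' Finset.univ Finset.univ_nonempty
    (fun sh : Fin m → Bool => if strictTail qb t (dotp t sh) ≤ γ then dotp t sh else ∑ i, |t i|)

noncomputable def phi (qb γ τ : ℝ) (t : Fin m → ℝ) (x : ℝ) : ℝ :=
  max 0 (min 1 ((x - qfun qb γ t) / τ))

noncomputable def scoreH (k : ℕ) (t : Fin m → ℝ) (s sh : Fin m → Bool) : ℝ :=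
  ∑ i : Fin m, if (i : ℕ) < k then (if sh i then |t i| else 0)
    else (if 0 < t i * sgn (s i) then |t i| else 0)

lemma dotp_nonneg (t : Fin m → ℝ) (sh : Fin m → Bool) : 0 ≤ dotp t sh :=
  Finset.sum_nonneg fun i _ => by by_cases h : sh i <;> simp [h, abs_nonneg]

lemma dotp_le (t : Fin m → ℝ) (sh : Fin m → Bool) : dotp t sh ≤ ∑ i, |t i| :=
  Finset.sum_le_sum fun i _ => by by_cases h : sh i <;> simp [h, abs_nonneg]

lemma bernVecPr_nonneg {qb : ℝ} (h0 : 0 ≤ qb) (h1 : qb ≤ 1) (sh : Fin m → Bool) :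
    0 ≤ bernVecPr qb sh :=
  Finset.prod_nonneg fun i _ => by by_cases h : sh i <;> simp [h, h0, sub_nonneg.2 h1]

lemma sum_bernVecPr {qb : ℝ} : ∑ sh : Fin m → Bool, bernVecPr qb sh = 1 := by
  classical
  have : (∏ i : Fin m, ∑ b : Bool, (if b then qb else 1 - qb)) = 1 := by
    simp
  rw [Finset.prod_univ_sum] at this
  rw [← this]
  rw [← Fintype.piFinset_univ]
  rfl

end AuditAux
namespace AuditAux

variable {m : ℕ} {qb γ τ : ℝ}

lemma phi_nonneg (t : Fin m → ℝ) (x : ℝ) : 0 ≤ phi qb γ τ t x := le_max_left _ _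

lemma phi_le_one (t : Fin m → ℝ) (x : ℝ) : phi qb γ τ t x ≤ 1 :=
  max_le zero_le_one (min_le_left _ _)

lemma phi_mono (hτ : 0 < τ) (t : Fin m → ℝ) {x y : ℝ} (h : x ≤ y) :
    phi qb γ τ t x ≤ phi qb γ τ t y := by
  unfold phi
  gcongr

lemma phi_eq_one (hτ : 0 < τ) (t : Fin m → ℝ) {x : ℝ} (h : qfun qb γ t + τ ≤ x) :
    phi qb γ τ t x = 1 := by
  have h1 : (1:ℝ) ≤ (x - qfun qb γ t) / τ := by
    rw [le_div_iff₀ hτ]; linarith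
  unfold phi
  rw [min_eq_left h1, max_eq_right zero_le_one]

lemma phi_le_ind (hτ : 0 < τ) (t : Fin m → ℝ) (x : ℝ) :
    phi qb γ τ t x ≤ if qfun qb γ t < x then 1 else 0 := by
  by_cases h : qfun qb γ t < x
  · simp [h, phi_le_one]
  · push_neg at h
    have : (x - qfun qb γ t) / τ ≤ 0 := div_nonpos_iff.2 (Or.inr ⟨by linarith, hτ.le⟩)
    simp only [if_neg (not_lt.2 h)]
    unfold phi
    have : min 1 ((x - qfun qb γ t) / τ) ≤ 0 := le_trans (min_le_right _ _) this
    simp [max_le le_rfl this]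

lemma phi_lipschitz (hτ : 0 < τ) (t : Fin m → ℝ) (x : ℝ) {a : ℝ} (ha : 0 ≤ a) :
    phi qb γ τ t (x + a) ≤ phi qb γ τ t x + a / τ := by
  have hd : 0 ≤ a / τ := div_nonneg ha hτ.le
  unfold phi
  have h1 : (x + a - qfun qb γ t) / τ = (x - qfun qb γ t) / τ + a / τ := by ring
  rw [h1]
  calc max 0 (min 1 ((x - qfun qb γ t) / τ + a / τ))
      ≤ max 0 (min 1 ((x - qfun qb γ t) / τ) + a / τ) := by
        gcongr
        calc min 1 ((x - qfun qb γ t) / τ + a / τ)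
            ≤ min (1 + a / τ) ((x - qfun qb γ t) / τ + a / τ) := by gcongr; linarith
          _ = min 1 ((x - qfun qb γ t) / τ) + a / τ := min_add_add_right _ _ _
    _ ≤ max 0 (min 1 ((x - qfun qb γ t) / τ)) + a / τ := by
        calc max 0 (min 1 ((x - qfun qb γ t) / τ) + a / τ)
            ≤ max (0 + a / τ) (min 1 ((x - qfun qb γ t) / τ) + a / τ) := by gcongr; linarith
          _ = max 0 (min 1 ((x - qfun qb γ t) / τ)) + a / τ := max_add_add_right _ _ _

end AuditAux
namespace AuditAux

variable {m : ℕ} {qb γ τ : ℝ}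

lemma strictTail_le_of_all (hq0 : 0 ≤ qb) (hq1 : qb ≤ 1) {t : Fin m → ℝ} {y z : ℝ}
    (h : ∀ sh : Fin m → Bool, y < dotp t sh → z ≤ dotp t sh) :
    strictTail qb t y ≤ ∑ sh : Fin m → Bool, bernVecPr qb sh * (if z ≤ dotp t sh then 1 else 0) := by
  apply Finset.sum_le_sum
  intro sh _
  apply mul_le_mul_of_nonneg_left _ (bernVecPr_nonneg hq0 hq1 sh)
  by_cases hy : y < dotp t sh
  · simp [hy, h sh hy]
  · simp only [if_neg hy]
    by_cases hz : z ≤ dotp t sh <;> simp [hz]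

/-- The top candidate (all-true) always qualifies. -/
lemma strictTail_top (hq0 : 0 ≤ qb) (hq1 : qb ≤ 1) (hγ : 0 ≤ γ) (t : Fin m → ℝ) :
    strictTail qb t (dotp t (fun _ => true)) ≤ γ := by
  have htop : dotp t (fun _ => true) = ∑ i, |t i| := by unfold dotp; simp
  have : strictTail qb t (dotp t (fun _ => true)) = 0 := by
    unfold strictTail
    apply Finset.sum_eq_zero
    intro sh _
    rw [htop]
    simp [not_lt.2 (dotp_le t sh)]
  rw [this]; exact hγ

/-- P1 : the tail at the quantile is at most γ. -/
lemma strictTail_qfun (hq0 : 0 ≤ qb) (hq1 : qb ≤ 1) (hγ : 0 ≤ γ) (t : Fin m → ℝ) :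
    strictTail qb t (qfun qb γ t) ≤ γ := by
  classical
  set Q : Finset (Fin m → Bool) :=
    Finset.univ.filter (fun sh => strictTail qb t (dotp t sh) ≤ γ) with hQ
  have hQne : Q.Nonempty := by
    refine ⟨fun _ => true, ?_⟩
    simp only [hQ, Finset.mem_filter, Finset.mem_univ, true_and]
    exact strictTail_top hq0 hq1 hγ t
  obtain ⟨sh₀, hsh₀Q, hmin⟩ := Q.exists_min_image (fun sh => dotp t sh) hQne
  have hsh₀ : strictTail qb t (dotp t sh₀) ≤ γ := (Finset.mem_filter.1 hsh₀Q).2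
  have heq : qfun qb γ t = dotp t sh₀ := by
    apply le_antisymm
    · apply Finset.inf'_le _ (Finset.mem_univ sh₀) |>.trans
      simp [hsh₀]
    · apply Finset.le_inf'
      intro sh _
      by_cases h : strictTail qb t (dotp t sh) ≤ γ
      · simpa [h] using hmin sh (by simp [hQ, h])
      · simpa [h] using dotp_le t sh₀
  rw [heq]; exact hsh₀

/-- P2 : for good t the quantile is at most g-threshold. -/
lemma qfun_le (hq0 : 0 ≤ qb) (hq1 : qb ≤ 1) (hγ : γ < 1) (t : Fin m → ℝ) (G : ℝ)
    (hG : ∑ sh : Fin m → Bool, bernVecPr qb sh * (if G ≤ dotp t sh then 1 else 0) ≤ γ) :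
    qfun qb γ t ≤ G := by
  classical
  by_cases hex : ∃ sh : Fin m → Bool, dotp t sh ≤ G
  · set C : Finset (Fin m → Bool) := Finset.univ.filter (fun sh => dotp t sh ≤ G) with hC
    have hCne : C.Nonempty := by
      obtain ⟨sh, hsh⟩ := hex
      exact ⟨sh, by simp [hC, hsh]⟩
    obtain ⟨sh₀, hsh₀C, hmax⟩ := C.exists_max_image (fun sh => dotp t sh) hCne
    have hle : dotp t sh₀ ≤ G := (Finset.mem_filter.1 hsh₀C).2
    have hqual : strictTail qb t (dotp t sh₀) ≤ γ := by
      refine le_trans (strictTail_le_of_all hq0 hq1 ?_) hG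
      intro sh hlt
      by_contra hgt
      push_neg at hgt
      exact absurd (hmax sh (by simp [hC, hgt.le])) (not_le.2 hlt)
    calc qfun qb γ t ≤ _ := Finset.inf'_le _ (Finset.mem_univ sh₀)
      _ ≤ G := by simp [hqual, hle]
  · exfalso
    push_neg at hex
    have h0 : G < dotp t (fun _ => false) := hex _
    have : ∑ sh : Fin m → Bool, bernVecPr qb sh * (if G ≤ dotp t sh then 1 else 0)
        = ∑ sh : Fin m → Bool, bernVecPr qb sh := by
      apply Finset.sum_congr rfl
      intro sh _
      simp [le_of_lt (hex sh)]
    rw [this, sum_bernVecPr] at hG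
    exact absurd hG (not_le.2 hγ)

end AuditAux
namespace AuditAux

variable {m : ℕ} {qb γ τ : ℝ}

lemma measurable_dotp (sh : Fin m → Bool) : Measurable (fun t : Fin m → ℝ => dotp t sh) := by
  apply Finset.measurable_sum
  intro i _
  by_cases h : sh i <;> simp only [h, if_true, if_false]
  · exact (measurable_pi_apply i).abs
  · exact measurable_const

lemma measurable_absSum : Measurable (fun t : Fin m → ℝ => ∑ i, |t i|) :=
  Finset.measurable_sum _ fun i _ => (measurable_pi_apply i).abs

lemma measurable_strictTail_dotp (sh : Fin m → Bool) :
    Measurable (fun t : Fin m → ℝ => strictTail qb t (dotp t sh)) := by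
  unfold strictTail
  apply Finset.measurable_sum
  intro sh' _
  apply Measurable.const_mul
  exact Measurable.ite (measurableSet_lt (measurable_dotp sh) (measurable_dotp sh'))
    measurable_const measurable_const

lemma measurable_inf' {ι : Type*} {s : Finset ι} (hs : s.Nonempty) {f : ι → (Fin m → ℝ) → ℝ}
    (hf : ∀ n ∈ s, Measurable (f n)) :
    Measurable (fun t => s.inf' hs (fun i => f i t)) := by
  have : (fun t => s.inf' hs (fun i => f i t)) = s.inf' hs f := by
    funext t; rw [Finset.inf'_apply]
  rw [this]
  exact Finset.inf'_induction hs _ (fun _f hf _g hg => hf.inf hg) hf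

lemma measurable_qfun : Measurable (qfun qb γ : (Fin m → ℝ) → ℝ) := by
  unfold qfun
  apply measurable_inf'
  intro sh _
  exact Measurable.ite (measurableSet_le (measurable_strictTail_dotp sh) measurable_const)
    (measurable_dotp sh) measurable_absSum

lemma measurable_phi_comp {x : (Fin m → ℝ) → ℝ} (hx : Measurable x) :
    Measurable (fun t => phi qb γ τ t (x t)) := by
  unfold phi
  exact measurable_const.max (measurable_const.min (((hx.sub measurable_qfun).div_const τ)))

lemma measurable_scoreH (k : ℕ) (s sh : Fin m → Bool) :
    Measurable (fun t => scoreH k t s sh) := by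
  unfold scoreH
  apply Finset.measurable_sum
  intro i _
  by_cases h : (i : ℕ) < k <;> simp only [h, if_true, if_false]
  · by_cases h2 : sh i <;> simp only [h2, if_true, if_false]
    · exact (measurable_pi_apply i).abs
    · exact measurable_const
  · exact Measurable.ite
      (measurableSet_lt measurable_const ((measurable_pi_apply i).mul_const _))
      (measurable_pi_apply i).abs measurable_const

lemma measurable_X (s : Fin m → Bool) :
    Measurable (fun t : Fin m → ℝ => ∑ i, max 0 (t i * sgn (s i))) := by
  apply Finset.measurable_sum
  intro i _
  exact measurable_const.max ((measurable_pi_apply i).mul_const _)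

lemma measurableSet_all (A : Set (Fin m → Bool)) : MeasurableSet A := by
  have : A = ⋃ s ∈ A, {s} := by simp
  rw [this]
  apply MeasurableSet.biUnion (Set.to_countable A)
  intro s _
  have : ({s} : Set (Fin m → Bool)) = ⋂ i, (fun v : Fin m → Bool => v i) ⁻¹' {s i} := by
    ext v; simp [funext_iff]
  rw [this]
  exact MeasurableSet.iInter fun i => (measurable_pi_apply i) (by trivial)

instance : MeasurableSingletonClass (Fin m → Bool) := ⟨fun s => measurableSet_all {s}⟩

lemma measurable_from_bool {β : Type*} [MeasurableSpace β] (f : (Fin m → Bool) → β) :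
    Measurable f := fun _A _hA => measurableSet_all _

end AuditAux
namespace AuditAux

lemma integrable_of_bdd {α : Type*} [MeasurableSpace α] {μ : Measure α} [IsFiniteMeasure μ]
    {f : α → ℝ} {c : ℝ} (hf : Measurable f) (h0 : ∀ t, 0 ≤ f t) (h1 : ∀ t, f t ≤ c) :
    Integrable f μ := by
  apply Integrable.mono' (integrable_const c) hf.aestronglyMeasurable
  apply ae_of_all
  intro t
  rw [Real.norm_eq_abs, abs_of_nonneg (h0 t)]
  exact h1 t

/-- Core analytic lemma : approximate-DP comparison of expectations of a.e.-bounded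
nonnegative functions. -/
lemma dp_exp {α : Type*} [MeasurableSpace α] (μ ν : Measure α)
    [IsProbabilityMeasure μ] [IsProbabilityMeasure ν] {ee dlt c : ℝ}
    (hee : 0 ≤ ee) (hdlt : 0 ≤ dlt) (hc : 0 ≤ c)
    (hDP : ∀ A : Set α, MeasurableSet A → μ A ≤ ENNReal.ofReal ee * ν A + ENNReal.ofReal dlt)
    {h : α → ℝ} (hm : Measurable h) (h0 : ∀ t, 0 ≤ h t)
    (hμ : ∀ᵐ t ∂μ, h t ≤ c) (hν : ∀ᵐ t ∂ν, h t ≤ c) :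
    ∫ t, h t ∂μ ≤ ee * ∫ t, h t ∂ν + c * dlt := by
  have hintμ : Integrable h μ := by
    apply Integrable.mono' (integrable_const c) hm.aestronglyMeasurable
    filter_upwards [hμ] with t ht
    rw [Real.norm_eq_abs, abs_of_nonneg (h0 t)]; exact ht
  have hintν : Integrable h ν := by
    apply Integrable.mono' (integrable_const c) hm.aestronglyMeasurable
    filter_upwards [hν] with t ht
    rw [Real.norm_eq_abs, abs_of_nonneg (h0 t)]; exact ht
  rw [hintμ.integral_eq_integral_Ioc_meas_le (ae_of_all _ h0) hμ,
      hintν.integral_eq_integral_Ioc_meas_le (ae_of_all _ h0) hν]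
  set Fμ : ℝ → ℝ := fun y => (μ {a | y ≤ h a}).toReal with hFμ
  set Fν : ℝ → ℝ := fun y => (ν {a | y ≤ h a}).toReal with hFν
  have hmeasFν : Measurable Fν := by
    apply Antitone.measurable
    intro y y' hyy'
    apply ENNReal.toReal_mono (measure_ne_top _ _)
    exact measure_mono (fun a ha => le_trans hyy' ha)
  have hintFν : IntegrableOn Fν (Set.Ioc 0 c) := by
    apply integrable_of_bdd hmeasFν (fun y => ENNReal.toReal_nonneg)
    intro y
    have := ENNReal.toReal_mono ENNReal.one_ne_top (prob_le_one (μ := ν) (s := {a | y ≤ h a}))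
    simpa [hFν] using this
  have hmeasFμ : Measurable Fμ := by
    apply Antitone.measurable
    intro y y' hyy'
    apply ENNReal.toReal_mono (measure_ne_top _ _)
    exact measure_mono (fun a ha => le_trans hyy' ha)
  have hintFμ : IntegrableOn Fμ (Set.Ioc 0 c) := by
    apply integrable_of_bdd hmeasFμ (fun y => ENNReal.toReal_nonneg)
    intro y
    have := ENNReal.toReal_mono ENNReal.one_ne_top (prob_le_one (μ := μ) (s := {a | y ≤ h a}))
    simpa [hFμ] using this
  have hpt : ∀ y, Fμ y ≤ ee * Fν y + dlt := by
    intro y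
    have hA : MeasurableSet {a | y ≤ h a} := measurableSet_le measurable_const hm
    have hdp := hDP _ hA
    have hne : ENNReal.ofReal ee * ν {a | y ≤ h a} + ENNReal.ofReal dlt ≠ ⊤ :=
      ENNReal.add_ne_top.2 ⟨ENNReal.mul_ne_top ENNReal.ofReal_ne_top (measure_ne_top _ _),
        ENNReal.ofReal_ne_top⟩
    calc Fμ y ≤ (ENNReal.ofReal ee * ν {a | y ≤ h a} + ENNReal.ofReal dlt).toReal :=
          ENNReal.toReal_mono hne hdp
      _ = ee * Fν y + dlt := by
          rw [ENNReal.toReal_add (ENNReal.mul_ne_top ENNReal.ofReal_ne_top (measure_ne_top _ _))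
            ENNReal.ofReal_ne_top, ENNReal.toReal_mul, ENNReal.toReal_ofReal hee,
            ENNReal.toReal_ofReal hdlt]
  have h1 : ∫ y in Set.Ioc 0 c, Fμ y ≤ ∫ y in Set.Ioc 0 c, (ee * Fν y + dlt) :=
    setIntegral_mono hintFμ ((hintFν.const_mul ee).add (integrableOn_const (by rw [Real.volume_Ioc]; exact ENNReal.ofReal_ne_top))) hpt
  have h2 : ∫ y in Set.Ioc 0 c, (ee * Fν y + dlt) = ee * (∫ y in Set.Ioc 0 c, Fν y) + c * dlt := by
    rw [integral_add (hintFν.const_mul ee) (integrableOn_const (by rw [Real.volume_Ioc]; exact ENNReal.ofReal_ne_top))]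
    rw [integral_const_mul, setIntegral_const, measureReal_def, Real.volume_Ioc, smul_eq_mul,
      ENNReal.toReal_ofReal (by linarith), sub_zero]
  exact h1.trans (le_of_eq h2)

end AuditAux
namespace AuditAux

variable {m : ℕ}

lemma update_funSplitAt (k : Fin m) (b c : Bool) (r : {j // j ≠ k} → Bool) :
    Function.update ((Equiv.funSplitAt k Bool).symm (b, r)) k c
      = (Equiv.funSplitAt k Bool).symm (c, r) := by
  funext j
  by_cases h : j = k
  · subst h; simp [Equiv.funSplitAt_symm_apply]
  · simp [Function.update_of_ne h, Equiv.funSplitAt_symm_apply, h]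

lemma resample (k : Fin m) (w : Fin m → Bool → ℝ) (hk : w k true + w k false = 1)
    (f : (Fin m → Bool) → ℝ) :
    ∑ s : Fin m → Bool, (∏ i, w i (s i)) * f s
      = ∑ s : Fin m → Bool, (∏ i, w i (s i)) *
          (w k true * f (Function.update s k true) + w k false * f (Function.update s k false)) := by
  classical
  set e := Equiv.funSplitAt k Bool with he
  rw [← Equiv.sum_comp e.symm (fun s => (∏ i, w i (s i)) * f s),
      ← Equiv.sum_comp e.symm (fun s => (∏ i, w i (s i)) *
        (w k true * f (Function.update s k true) + w k false * f (Function.update s k false)))]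
  rw [Fintype.sum_prod_type_right, Fintype.sum_prod_type_right]
  apply Finset.sum_congr rfl
  intro r _
  set C : ℝ := ∏ i ∈ Finset.univ.erase k, w i (e.symm (true, r) i) with hC
  have hsymmk : ∀ b : Bool, e.symm (b, r) k = b := by
    intro b; simp [he, Equiv.funSplitAt_symm_apply]
  have hProd : ∀ b : Bool, (∏ i, w i (e.symm (b, r) i)) = w k b * C := by
    intro b
    rw [← Finset.mul_prod_erase Finset.univ (fun i => w i (e.symm (b, r) i)) (Finset.mem_univ k)]
    congr 1
    · rw [hsymmk]
    · apply Finset.prod_congr rfl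
      intro i hi
      have hik : i ≠ k := (Finset.mem_erase.1 hi).1
      simp [he, Equiv.funSplitAt_symm_apply, hik]
  rw [Fintype.sum_bool, Fintype.sum_bool, hProd, hProd, update_funSplitAt, update_funSplitAt,
    update_funSplitAt, update_funSplitAt]
  set FT := f (e.symm (true, r))
  set FF := f (e.symm (false, r))
  calc w k true * C * FT + w k false * C * FF
      = (w k true + w k false) * (C * (w k true * FT + w k false * FF)) := by rw [hk]; ring
    _ = w k true * C * (w k true * FT + w k false * FF)
        + w k false * C * (w k true * FT + w k false * FF) := by ring

end AuditAux
namespace AuditAux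

variable {m : ℕ}

/-- The core two-measure inequality for one coordinate. -/
lemma core (κ : Fin m) (ε δ γ τ : ℝ) (hδ0 : 0 ≤ δ) (hτ : 0 < τ)
    (qb : ℝ) (hqb : qb = exp ε / (exp ε + 1))
    (μp μm : Measure (Fin m → ℝ)) [IsProbabilityMeasure μp] [IsProbabilityMeasure μm]
    (hDPpm : ∀ A : Set (Fin m → ℝ), MeasurableSet A →
      μp A ≤ ENNReal.ofReal (exp ε) * μm A + ENNReal.ofReal δ)
    (hDPmp : ∀ A : Set (Fin m → ℝ), MeasurableSet A →
      μm A ≤ ENNReal.ofReal (exp ε) * μp A + ENNReal.ofReal δ)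
    (hrp : ∀ᵐ t ∂μp, |t κ| ≤ 1) (hrm : ∀ᵐ t ∂μm, |t κ| ≤ 1)
    (β : (Fin m → ℝ) → ℝ) (hβ : Measurable β) :
    (∫ t, phi qb γ τ t (β t + if 0 < t κ then |t κ| else 0) ∂μp)
      + (∫ t, phi qb γ τ t (β t + if t κ < 0 then |t κ| else 0) ∂μm)
    ≤ ((∫ t, (qb * phi qb γ τ t (β t + |t κ|) + (1 - qb) * phi qb γ τ t (β t)) ∂μp)
      + (∫ t, (qb * phi qb γ τ t (β t + |t κ|) + (1 - qb) * phi qb γ τ t (β t)) ∂μm))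
      + 2 * (δ / τ) := by
  have hE : (0:ℝ) < exp ε := exp_pos ε
  have hE1 : (0:ℝ) < exp ε + 1 := by linarith
  have hqb0 : 0 ≤ qb := by rw [hqb]; positivity
  have hqb1 : qb ≤ 1 := by rw [hqb, div_le_one hE1]; linarith
  have hEq : exp ε * (1 - qb) = qb := by
    rw [hqb]; field_simp; ring
  set f0 : (Fin m → ℝ) → ℝ := fun t => phi qb γ τ t (β t) with hf0
  set f1 : (Fin m → ℝ) → ℝ := fun t => phi qb γ τ t (β t + |t κ|) with hf1
  set D : (Fin m → ℝ) → ℝ := fun t => f1 t - f0 t with hD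
  have hmf0 : Measurable f0 := measurable_phi_comp hβ
  have hmf1 : Measurable f1 := measurable_phi_comp (hβ.add (measurable_pi_apply κ).abs)
  have hmD : Measurable D := hmf1.sub hmf0
  have hD0 : ∀ t, 0 ≤ D t := fun t =>
    sub_nonneg.2 (phi_mono hτ t (le_add_of_nonneg_right (abs_nonneg _)))
  have hD1 : ∀ t, D t ≤ 1 := fun t => by
    have := phi_le_one (qb := qb) (γ := γ) (τ := τ) t (β t + |t κ|)
    have := phi_nonneg (qb := qb) (γ := γ) (τ := τ) t (β t)
    simp only [hD, hf1, hf0]; linarith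
  have hDle : ∀ t, |t κ| ≤ 1 → D t ≤ 1 / τ := by
    intro t ht
    have h1 : f1 t ≤ f0 t + |t κ| / τ := phi_lipschitz hτ t (β t) (abs_nonneg _)
    have h2 : |t κ| / τ ≤ 1 / τ := by gcongr
    simp only [hD]; linarith
  set hp : (Fin m → ℝ) → ℝ := fun t => D t * (if 0 < t κ then 1 else 0) with hhp
  set hm' : (Fin m → ℝ) → ℝ := fun t => D t * (if t κ < 0 then 1 else 0) with hhm
  have hmhp : Measurable hp := hmD.mul (Measurable.ite
    (measurableSet_lt measurable_const (measurable_pi_apply κ)) measurable_const measurable_const)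
  have hmhm : Measurable hm' := hmD.mul (Measurable.ite
    (measurableSet_lt (measurable_pi_apply κ) measurable_const) measurable_const measurable_const)
  have hp0 : ∀ t, 0 ≤ hp t := fun t => mul_nonneg (hD0 t) (by positivity)
  have hm0 : ∀ t, 0 ≤ hm' t := fun t => mul_nonneg (hD0 t) (by positivity)
  have hpleD : ∀ t, hp t ≤ D t := fun t => by
    simp only [hhp]
    by_cases h : 0 < t κ <;> simp [h, hD0 t]
  have hmleD : ∀ t, hm' t ≤ D t := fun t => by
    simp only [hhm]
    by_cases h : t κ < 0 <;> simp [h, hD0 t]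
  have hsum : ∀ t, hp t + hm' t ≤ D t := by
    intro t
    by_cases h : 0 < t κ
    · have : ¬ t κ < 0 := by linarith
      simp only [hhp, hhm, if_pos h, if_neg this]
      simp [hD0 t]
    · simp only [hhp, hhm, if_neg h]
      have := hmleD t
      simp only [hhm] at this
      simpa using this
  -- integrabilities
  have int_f0 : ∀ (μ : Measure (Fin m → ℝ)) [IsProbabilityMeasure μ], Integrable f0 μ :=
    fun μ _ => integrable_of_bdd hmf0 (fun t => phi_nonneg t _) (fun t => phi_le_one t _)
  have int_f1 : ∀ (μ : Measure (Fin m → ℝ)) [IsProbabilityMeasure μ], Integrable f1 μ :=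
    fun μ _ => integrable_of_bdd hmf1 (fun t => phi_nonneg t _) (fun t => phi_le_one t _)
  have int_D : ∀ (μ : Measure (Fin m → ℝ)) [IsProbabilityMeasure μ], Integrable D μ :=
    fun μ _ => integrable_of_bdd hmD hD0 hD1
  have int_hp : ∀ (μ : Measure (Fin m → ℝ)) [IsProbabilityMeasure μ], Integrable hp μ :=
    fun μ _ => integrable_of_bdd hmhp hp0 (fun t => (hpleD t).trans (hD1 t))
  have int_hm : ∀ (μ : Measure (Fin m → ℝ)) [IsProbabilityMeasure μ], Integrable hm' μ :=
    fun μ _ => integrable_of_bdd hmhm hm0 (fun t => (hmleD t).trans (hD1 t))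
  -- decompose LHS
  have hLp : (∫ t, phi qb γ τ t (β t + if 0 < t κ then |t κ| else 0) ∂μp)
      = (∫ t, f0 t ∂μp) + ∫ t, hp t ∂μp := by
    rw [← integral_add (int_f0 μp) (int_hp μp)]
    apply integral_congr_ae; apply ae_of_all; intro t
    by_cases h : 0 < t κ <;> simp [hhp, hf0, hf1, hD, h]
  have hLm : (∫ t, phi qb γ τ t (β t + if t κ < 0 then |t κ| else 0) ∂μm)
      = (∫ t, f0 t ∂μm) + ∫ t, hm' t ∂μm := by
    rw [← integral_add (int_f0 μm) (int_hm μm)]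
    apply integral_congr_ae; apply ae_of_all; intro t
    by_cases h : t κ < 0 <;> simp [hhm, hf0, hf1, hD, h]
  -- decompose RHS
  have hR : ∀ (μ : Measure (Fin m → ℝ)) [IsProbabilityMeasure μ],
      (∫ t, (qb * phi qb γ τ t (β t + |t κ|) + (1 - qb) * phi qb γ τ t (β t)) ∂μ)
        = (∫ t, f0 t ∂μ) + qb * ∫ t, D t ∂μ := by
    intro μ _
    rw [← integral_const_mul, ← integral_add (int_f0 μ) ((int_D μ).const_mul qb)]
    apply integral_congr_ae; apply ae_of_all; intro t
    simp only [hf0, hf1, hD]; ring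
  rw [hLp, hLm, hR μp, hR μm]
  -- core comparison
  have hd : 0 ≤ δ / τ := by positivity
  have hc : (0:ℝ) ≤ 1 / τ := by positivity
  have x1 : ∫ t, hp t ∂μp ≤ exp ε * ∫ t, hp t ∂μm + (1/τ) * δ := by
    apply dp_exp μp μm hE.le hδ0 hc hDPpm hmhp hp0
    · filter_upwards [hrp] with t ht
      exact (hpleD t).trans (hDle t ht)
    · filter_upwards [hrm] with t ht
      exact (hpleD t).trans (hDle t ht)
  have x2 : ∫ t, hm' t ∂μm ≤ exp ε * ∫ t, hm' t ∂μp + (1/τ) * δ := by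
    apply dp_exp μm μp hE.le hδ0 hc hDPmp hmhm hm0
    · filter_upwards [hrm] with t ht
      exact (hmleD t).trans (hDle t ht)
    · filter_upwards [hrp] with t ht
      exact (hmleD t).trans (hDle t ht)
  have hSp : (∫ t, hp t ∂μp) + (∫ t, hm' t ∂μp) ≤ ∫ t, D t ∂μp := by
    rw [← integral_add (int_hp μp) (int_hm μp)]
    exact integral_mono ((int_hp μp).add (int_hm μp)) (int_D μp) hsum
  have hSm : (∫ t, hp t ∂μm) + (∫ t, hm' t ∂μm) ≤ ∫ t, D t ∂μm := by
    rw [← integral_add (int_hp μm) (int_hm μm)]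
    exact integral_mono ((int_hp μm).add (int_hm μm)) (int_D μm) hsum
  set a1 := ∫ t, hp t ∂μp
  set a2 := ∫ t, hm' t ∂μm
  set b1 := ∫ t, hp t ∂μm
  set b2 := ∫ t, hm' t ∂μp
  set Sp := ∫ t, D t ∂μp
  set Sm := ∫ t, D t ∂μm
  have hb1 : 0 ≤ b1 := integral_nonneg hp0
  have hb2 : 0 ≤ b2 := integral_nonneg hm0
  have ha1 : 0 ≤ a1 := integral_nonneg hp0
  have ha2 : 0 ≤ a2 := integral_nonneg hm0
  have key : a1 + a2 ≤ qb * (Sp + Sm) + 2 * (δ/τ) := by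
    have hab : a1 + a2 ≤ exp ε * (b1 + b2) + 2 * (δ/τ) := by
      have : (1/τ) * δ = δ/τ := by ring
      rw [this] at x1 x2
      linarith
    have h1 : (1 - qb) * (a1 + a2) ≤ (1 - qb) * (exp ε * (b1 + b2) + 2 * (δ/τ)) :=
      mul_le_mul_of_nonneg_left hab (by linarith)
    have h2 : (1 - qb) * (exp ε * (b1 + b2)) = qb * (b1 + b2) := by
      rw [← mul_assoc, mul_comm (1 - qb) (exp ε), hEq]
    have h3 : qb * (a1 + a2 + (b1 + b2)) ≤ qb * (Sp + Sm) :=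
      mul_le_mul_of_nonneg_left (by linarith) hqb0
    nlinarith [h1, h2, h3]
  linarith [key]

end AuditAux
namespace AuditAux

variable {m : ℕ}

noncomputable def Hyb (M : (Fin m → Bool) → Measure (Fin m → ℝ)) (qb γ τ : ℝ) (k : ℕ) : ℝ :=
  ∑ s : Fin m → Bool, ∑ sh : Fin m → Bool,
    ((2:ℝ)^m)⁻¹ * bernVecPr qb sh * ∫ t, phi qb γ τ t (scoreH k t s sh) ∂(M s)

noncomputable def baseS (k : ℕ) (κ : Fin m) (t : Fin m → ℝ) (s sh : Fin m → Bool) : ℝ :=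
  ∑ i ∈ Finset.univ.erase κ, if (i : ℕ) < k then (if sh i then |t i| else 0)
    else (if 0 < t i * sgn (s i) then |t i| else 0)

lemma scoreH_split (k : ℕ) (κ : Fin m) (hκ : (κ : ℕ) = k) (t : Fin m → ℝ) (s sh : Fin m → Bool) :
    scoreH k t s sh = baseS k κ t s sh + (if 0 < t κ * sgn (s κ) then |t κ| else 0) := by
  rw [scoreH, ← Finset.sum_erase_add _ _ (Finset.mem_univ κ)]
  congr 1
  simp [hκ]

lemma scoreH_succ_split (k : ℕ) (κ : Fin m) (hκ : (κ : ℕ) = k) (t : Fin m → ℝ)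
    (s sh : Fin m → Bool) :
    scoreH (k+1) t s sh = baseS k κ t s sh + (if sh κ then |t κ| else 0) := by
  rw [scoreH, ← Finset.sum_erase_add _ _ (Finset.mem_univ κ)]
  congr 1
  · apply Finset.sum_congr rfl
    intro i hi
    have hik : (i : ℕ) ≠ k := by
      have h1 : i ≠ κ := (Finset.mem_erase.1 hi).1
      rw [← hκ]
      exact fun h => h1 (Fin.ext h)
    exact if_congr (by omega) rfl rfl
  · simp [hκ]

lemma baseS_update_s (k : ℕ) (κ : Fin m) (t : Fin m → ℝ) (s sh : Fin m → Bool) (b : Bool) :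
    baseS k κ t (Function.update s κ b) sh = baseS k κ t s sh :=
  Finset.sum_congr rfl fun i hi => by
    rw [Function.update_of_ne (Finset.mem_erase.1 hi).1]

lemma baseS_update_sh (k : ℕ) (κ : Fin m) (t : Fin m → ℝ) (s sh : Fin m → Bool) (b : Bool) :
    baseS k κ t s (Function.update sh κ b) = baseS k κ t s sh :=
  Finset.sum_congr rfl fun i hi => by
    rw [Function.update_of_ne (Finset.mem_erase.1 hi).1]

lemma measurable_baseS (k : ℕ) (κ : Fin m) (s sh : Fin m → Bool) :
    Measurable (fun t => baseS k κ t s sh) := by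
  unfold baseS
  apply Finset.measurable_sum
  intro i _
  by_cases h : (i : ℕ) < k <;> simp only [h, if_true, if_false]
  · by_cases h2 : sh i <;> simp only [h2, if_true, if_false]
    · exact (measurable_pi_apply i).abs
    · exact measurable_const
  · exact Measurable.ite
      (measurableSet_lt measurable_const ((measurable_pi_apply i).mul_const _))
      (measurable_pi_apply i).abs measurable_const

lemma scoreH_update (k : ℕ) (κ : Fin m) (hκ : (κ : ℕ) = k) (t : Fin m → ℝ)
    (s sh : Fin m → Bool) (b : Bool) :
    scoreH k t (Function.update s κ b) sh
      = baseS k κ t s sh + (if 0 < t κ * sgn b then |t κ| else 0) := by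
  rw [scoreH_split k κ hκ, baseS_update_s, Function.update_self]

lemma scoreH_succ_update (k : ℕ) (κ : Fin m) (hκ : (κ : ℕ) = k) (t : Fin m → ℝ)
    (s sh : Fin m → Bool) (b c : Bool) :
    scoreH (k+1) t (Function.update s κ b) (Function.update sh κ c)
      = baseS k κ t s sh + (if c then |t κ| else 0) := by
  rw [scoreH_succ_split k κ hκ, baseS_update_sh, baseS_update_s, Function.update_self]

lemma step (M : (Fin m → Bool) → Measure (Fin m → ℝ))
    (hMprob : ∀ s, IsProbabilityMeasure (M s))
    (hrange : ∀ s, ∀ᵐ t ∂(M s), ∀ i, |t i| ≤ 1)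
    (ε δ γ τ : ℝ) (hDP : ApproxDP M ε δ) (hδ0 : 0 ≤ δ) (hτ : 0 < τ)
    (qb : ℝ) (hqb : qb = exp ε / (exp ε + 1))
    (k : ℕ) (hk : k < m) :
    Hyb M qb γ τ k ≤ Hyb M qb γ τ (k+1) + δ / τ := by
  classical
  have hE : (0:ℝ) < exp ε := exp_pos ε
  have hE1 : (0:ℝ) < exp ε + 1 := by linarith
  have hqb0 : 0 ≤ qb := by rw [hqb]; positivity
  have hqb1 : qb ≤ 1 := by rw [hqb, div_le_one hE1]; linarith
  set κ : Fin m := ⟨k, hk⟩ with hκdef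
  have hκ : (κ : ℕ) = k := rfl
  haveI : ∀ s, IsProbabilityMeasure (M s) := hMprob
  have intphi : ∀ (s : Fin m → Bool) (x : (Fin m → ℝ) → ℝ), Measurable x →
      Integrable (fun t => phi qb γ τ t (x t)) (M s) := by
    intro s x hx
    exact integrable_of_bdd (measurable_phi_comp hx) (fun t => phi_nonneg t _)
      (fun t => phi_le_one t _)
  set F : (Fin m → Bool) → ℝ := fun s => ∑ sh : Fin m → Bool,
    bernVecPr qb sh * ∫ t, phi qb γ τ t (scoreH k t s sh) ∂(M s) with hF
  set G : (Fin m → Bool) → ℝ := fun s => ∑ sh : Fin m → Bool,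
    bernVecPr qb sh * ∫ t, phi qb γ τ t (scoreH (k+1) t s sh) ∂(M s) with hG
  have hprodconst : (∏ _i : Fin m, (2:ℝ)⁻¹) = ((2:ℝ)^m)⁻¹ := by
    rw [Finset.prod_const, Finset.card_univ, Fintype.card_fin, inv_pow]
  have hHybF : ∀ j : ℕ, Hyb M qb γ τ j = ∑ s : Fin m → Bool, (∏ _i : Fin m, (2:ℝ)⁻¹) *
      (∑ sh : Fin m → Bool, bernVecPr qb sh * ∫ t, phi qb γ τ t (scoreH j t s sh) ∂(M s)) := by
    intro j
    rw [Hyb]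
    apply Finset.sum_congr rfl
    intro s _
    rw [Finset.mul_sum, hprodconst]
    apply Finset.sum_congr rfl
    intro sh _
    ring
  have hresF : Hyb M qb γ τ k = ∑ s : Fin m → Bool, (∏ _i : Fin m, (2:ℝ)⁻¹) *
      ((2:ℝ)⁻¹ * F (Function.update s κ true) + (2:ℝ)⁻¹ * F (Function.update s κ false)) := by
    rw [hHybF k]
    exact resample κ (fun _ _ => (2:ℝ)⁻¹) (by norm_num) F
  have hresG : Hyb M qb γ τ (k+1) = ∑ s : Fin m → Bool, (∏ _i : Fin m, (2:ℝ)⁻¹) *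
      ((2:ℝ)⁻¹ * G (Function.update s κ true) + (2:ℝ)⁻¹ * G (Function.update s κ false)) := by
    rw [hHybF (k+1)]
    exact resample κ (fun _ _ => (2:ℝ)⁻¹) (by norm_num) G
  rw [hresF, hresG]
  have hper : ∀ s : Fin m → Bool,
      (2:ℝ)⁻¹ * F (Function.update s κ true) + (2:ℝ)⁻¹ * F (Function.update s κ false)
      ≤ ((2:ℝ)⁻¹ * G (Function.update s κ true) + (2:ℝ)⁻¹ * G (Function.update s κ false))
        + δ / τ := by
    intro s
    have hadj : Adjacent (Function.update s κ true) (Function.update s κ false) :=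
      ⟨κ, fun i hi => by rw [Function.update_of_ne hi, Function.update_of_ne hi]⟩
    have hadj' : Adjacent (Function.update s κ false) (Function.update s κ true) :=
      ⟨κ, fun i hi => by rw [Function.update_of_ne hi, Function.update_of_ne hi]⟩
    have hrp : ∀ᵐ t ∂(M (Function.update s κ true)), |t κ| ≤ 1 := by
      filter_upwards [hrange (Function.update s κ true)] with t ht using ht κ
    have hrm : ∀ᵐ t ∂(M (Function.update s κ false)), |t κ| ≤ 1 := by
      filter_upwards [hrange (Function.update s κ false)] with t ht using ht κ
    set Ip : (Fin m → Bool) → ℝ := fun sh =>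
      ∫ t, phi qb γ τ t (baseS k κ t s sh + if 0 < t κ then |t κ| else 0)
        ∂(M (Function.update s κ true)) with hIp
    set Im : (Fin m → Bool) → ℝ := fun sh =>
      ∫ t, phi qb γ τ t (baseS k κ t s sh + if t κ < 0 then |t κ| else 0)
        ∂(M (Function.update s κ false)) with hIm
    set Rp : (Fin m → Bool) → ℝ := fun sh =>
      ∫ t, (qb * phi qb γ τ t (baseS k κ t s sh + |t κ|)
        + (1 - qb) * phi qb γ τ t (baseS k κ t s sh)) ∂(M (Function.update s κ true)) with hRp
    set Rm : (Fin m → Bool) → ℝ := fun sh =>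
      ∫ t, (qb * phi qb γ τ t (baseS k κ t s sh + |t κ|)
        + (1 - qb) * phi qb γ τ t (baseS k κ t s sh)) ∂(M (Function.update s κ false)) with hRm
    have hFp : F (Function.update s κ true) = ∑ sh : Fin m → Bool, bernVecPr qb sh * Ip sh := by
      simp only [hF, hIp]
      apply Finset.sum_congr rfl
      intro sh _
      congr 1
      apply integral_congr_ae; apply ae_of_all; intro t
      simp only [scoreH_update k κ hκ, sgn]
      norm_num
    have hFm : F (Function.update s κ false) = ∑ sh : Fin m → Bool, bernVecPr qb sh * Im sh := by
      simp only [hF, hIm]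
      apply Finset.sum_congr rfl
      intro sh _
      congr 1
      apply integral_congr_ae; apply ae_of_all; intro t
      simp only [scoreH_update k κ hκ, sgn]
      norm_num
    have hGres : ∀ b : Bool, G (Function.update s κ b) = ∑ sh : Fin m → Bool, bernVecPr qb sh *
        ∫ t, (qb * phi qb γ τ t (baseS k κ t s sh + |t κ|)
          + (1 - qb) * phi qb γ τ t (baseS k κ t s sh)) ∂(M (Function.update s κ b)) := by
      intro b
      simp only [hG]
      have hres := resample κ (fun _ c => if c then qb else 1 - qb) (by simp)
        (fun sh => ∫ t, phi qb γ τ t (scoreH (k+1) t (Function.update s κ b) sh)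
          ∂(M (Function.update s κ b)))
      simp only [bernVecPr]
      rw [hres]
      apply Finset.sum_congr rfl
      intro sh _
      congr 1
      simp only [if_true, Bool.false_eq_true, if_false]
      rw [← integral_const_mul, ← integral_const_mul, ← integral_add]
      · apply integral_congr_ae; apply ae_of_all; intro t
        simp only [scoreH_succ_update k κ hκ]
        simp
      · exact (intphi _ _ (((measurable_baseS k κ s sh).add
          (measurable_pi_apply κ).abs))).const_mul qb |>.congr
          (ae_of_all _ (fun t => by simp only [scoreH_succ_update k κ hκ]; simp))
      · exact ((intphi _ _ (measurable_baseS k κ s sh)).const_mul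
          (1 - qb)).congr (ae_of_all _ (fun t => by simp only [scoreH_succ_update k κ hκ]; simp))
    have hcore : ∀ sh : Fin m → Bool, Ip sh + Im sh ≤ (Rp sh + Rm sh) + 2 * (δ / τ) := by
      intro sh
      exact core κ ε δ γ τ hδ0 hτ qb hqb _ _
        (fun A hA => hDP _ _ hadj A hA) (fun A hA => hDP _ _ hadj' A hA)
        hrp hrm (fun t => baseS k κ t s sh) (measurable_baseS k κ s sh)
    have hsum1 : F (Function.update s κ true) + F (Function.update s κ false)
        ≤ G (Function.update s κ true) + G (Function.update s κ false) + 2 * (δ / τ) := by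
      rw [hFp, hFm, hGres true, hGres false, ← Finset.sum_add_distrib, ← Finset.sum_add_distrib]
      have hterm : ∀ sh ∈ (Finset.univ : Finset (Fin m → Bool)),
          bernVecPr qb sh * Ip sh + bernVecPr qb sh * Im sh
          ≤ (bernVecPr qb sh * Rp sh + bernVecPr qb sh * Rm sh)
            + bernVecPr qb sh * (2 * (δ / τ)) := by
        intro sh _
        have hB := bernVecPr_nonneg hqb0 hqb1 sh
        have h := mul_le_mul_of_nonneg_left (hcore sh) hB
        calc bernVecPr qb sh * Ip sh + bernVecPr qb sh * Im sh
            = bernVecPr qb sh * (Ip sh + Im sh) := by ring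
          _ ≤ bernVecPr qb sh * ((Rp sh + Rm sh) + 2 * (δ / τ)) := h
          _ = (bernVecPr qb sh * Rp sh + bernVecPr qb sh * Rm sh)
              + bernVecPr qb sh * (2 * (δ / τ)) := by ring
      refine (Finset.sum_le_sum hterm).trans (le_of_eq ?_)
      rw [Finset.sum_add_distrib, ← Finset.sum_mul, sum_bernVecPr, one_mul]
    linarith [hsum1]
  refine le_trans (Finset.sum_le_sum (fun s _ => mul_le_mul_of_nonneg_left (hper s)
    (Finset.prod_nonneg (fun i _ => by norm_num)))) (le_of_eq ?_)
  have : ∀ s ∈ (Finset.univ : Finset (Fin m → Bool)),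
      (∏ _i : Fin m, (2:ℝ)⁻¹) *
        (((2:ℝ)⁻¹ * G (Function.update s κ true) + (2:ℝ)⁻¹ * G (Function.update s κ false)) + δ / τ)
      = (∏ _i : Fin m, (2:ℝ)⁻¹) *
          ((2:ℝ)⁻¹ * G (Function.update s κ true) + (2:ℝ)⁻¹ * G (Function.update s κ false))
        + (∏ _i : Fin m, (2:ℝ)⁻¹) * (δ / τ) := fun s _ => by ring
  rw [Finset.sum_congr rfl this, Finset.sum_add_distrib, ← Finset.sum_mul]
  congr 1
  rw [Finset.sum_const, Finset.card_univ, nsmul_eq_mul, hprodconst]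
  have hcard : ((Fintype.card (Fin m → Bool)) : ℝ) = 2^m := by
    rw [Fintype.card_fun, Fintype.card_bool, Fintype.card_fin]
    norm_num
  rw [hcard]
  have h2m : ((2:ℝ)^m) ≠ 0 := by positivity
  field_simp

end AuditAux
namespace AuditAux

variable {m : ℕ}

lemma scoreH_m (t : Fin m → ℝ) (s sh : Fin m → Bool) : scoreH m t s sh = dotp t sh := by
  apply Finset.sum_congr rfl
  intro i _
  rw [if_pos i.isLt]

lemma scoreH_zero (t : Fin m → ℝ) (s sh sh' : Fin m → Bool) :
    scoreH 0 t s sh = scoreH 0 t s sh' := by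
  apply Finset.sum_congr rfl
  intro i _
  rw [if_neg (Nat.not_lt_zero _), if_neg (Nat.not_lt_zero _)]

lemma hyb_final (M : (Fin m → Bool) → Measure (Fin m → ℝ))
    (hMprob : ∀ s, IsProbabilityMeasure (M s))
    (qb γ τ : ℝ) (hqb0 : 0 ≤ qb) (hqb1 : qb ≤ 1) (hγ0 : 0 ≤ γ) (hτ : 0 < τ) :
    Hyb M qb γ τ m ≤ γ := by
  haveI : ∀ s, IsProbabilityMeasure (M s) := hMprob
  have hint : ∀ (s sh : Fin m → Bool),
      Integrable (fun t => bernVecPr qb sh * phi qb γ τ t (dotp t sh)) (M s) :=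
    fun s sh => (integrable_of_bdd (measurable_phi_comp (measurable_dotp sh))
      (fun t => phi_nonneg t _) (fun t => phi_le_one t _)).const_mul _
  have hs : ∀ s : Fin m → Bool, ∑ sh : Fin m → Bool,
      ((2:ℝ)^m)⁻¹ * bernVecPr qb sh * ∫ t, phi qb γ τ t (scoreH m t s sh) ∂(M s)
      ≤ ((2:ℝ)^m)⁻¹ * γ := by
    intro s
    have h1 : ∀ sh : Fin m → Bool,
        ((2:ℝ)^m)⁻¹ * bernVecPr qb sh * ∫ t, phi qb γ τ t (scoreH m t s sh) ∂(M s)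
        = ((2:ℝ)^m)⁻¹ * ∫ t, bernVecPr qb sh * phi qb γ τ t (dotp t sh) ∂(M s) := by
      intro sh
      rw [integral_const_mul, mul_assoc]
      congr 2
      apply integral_congr_ae; apply ae_of_all; intro t
      simp only [scoreH_m]
    rw [Finset.sum_congr rfl (fun sh _ => h1 sh), ← Finset.mul_sum]
    apply mul_le_mul_of_nonneg_left _ (by positivity)
    rw [← integral_finset_sum _ (fun sh _ => hint s sh)]
    calc ∫ t, (∑ sh : Fin m → Bool, bernVecPr qb sh * phi qb γ τ t (dotp t sh)) ∂(M s)
        ≤ ∫ _t, γ ∂(M s) := by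
          apply integral_mono _ (integrable_const γ)
          · intro t
            calc ∑ sh : Fin m → Bool, bernVecPr qb sh * phi qb γ τ t (dotp t sh)
                ≤ ∑ sh : Fin m → Bool, bernVecPr qb sh * (if qfun qb γ t < dotp t sh then 1 else 0) :=
                  Finset.sum_le_sum (fun sh _ => mul_le_mul_of_nonneg_left
                    (phi_le_ind hτ t _) (bernVecPr_nonneg hqb0 hqb1 sh))
              _ = strictTail qb t (qfun qb γ t) := rfl
              _ ≤ γ := strictTail_qfun hqb0 hqb1 hγ0 t
          · exact integrable_finset_sum _ (fun sh _ => hint s sh)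
      _ = γ := by simp
  calc Hyb M qb γ τ m ≤ ∑ _s : Fin m → Bool, ((2:ℝ)^m)⁻¹ * γ :=
        Finset.sum_le_sum (fun s _ => hs s)
    _ = γ := by
        rw [Finset.sum_const, Finset.card_univ, nsmul_eq_mul]
        have hcard : ((Fintype.card (Fin m → Bool)) : ℝ) = 2^m := by
          rw [Fintype.card_fun, Fintype.card_bool, Fintype.card_fin]; norm_num
        rw [hcard]
        have h2m : ((2:ℝ)^m) ≠ 0 := by positivity
        field_simp

end AuditAux
namespace AuditAux

variable {m : ℕ}

lemma abs_sgn (b : Bool) : |sgn b| = 1 := by cases b <;> simp [sgn]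

lemma X_le_score0 (t : Fin m → ℝ) (s : Fin m → Bool) :
    (∑ i, max 0 (t i * sgn (s i))) ≤ scoreH 0 t s s := by
  apply Finset.sum_le_sum
  intro i _
  rw [if_neg (Nat.not_lt_zero _)]
  by_cases h : 0 < t i * sgn (s i)
  · rw [if_pos h, max_eq_right h.le]
    calc t i * sgn (s i) ≤ |t i * sgn (s i)| := le_abs_self _
      _ = |t i| := by rw [abs_mul, abs_sgn, mul_one]
  · push_neg at h
    rw [if_neg (not_lt.2 h), max_eq_left h]

lemma hyb_start (M : (Fin m → Bool) → Measure (Fin m → ℝ))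
    (hMprob : ∀ s, IsProbabilityMeasure (M s))
    (qb γ τ : ℝ) (hτ : 0 < τ) :
    ((((PMF.uniformOfFintype (Fin m → Bool)).toMeasure).bind
        (fun s => (M s).map (fun t => (t, s))))
      {p : (Fin m → ℝ) × (Fin m → Bool) |
        qfun qb γ p.1 + τ ≤ ∑ i, max 0 (p.1 i * sgn (p.2 i))}).toReal
    ≤ Hyb M qb γ τ 0 := by
  classical
  haveI : ∀ s, IsProbabilityMeasure (M s) := hMprob
  set E' : Set ((Fin m → ℝ) × (Fin m → Bool)) :=
    {p | qfun qb γ p.1 + τ ≤ ∑ i, max 0 (p.1 i * sgn (p.2 i))} with hE'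
  set As : (Fin m → Bool) → Set (Fin m → ℝ) :=
    fun s => {t | qfun qb γ t + τ ≤ ∑ i, max 0 (t i * sgn (s i))} with hAs
  have hAsmeas : ∀ s, MeasurableSet (As s) := by
    intro s
    exact measurableSet_le (measurable_qfun.add measurable_const) (measurable_X s)
  have hE'meas : MeasurableSet E' := by
    apply measurableSet_le
    · exact (measurable_qfun.comp measurable_fst).add measurable_const
    · apply Finset.measurable_sum
      intro i _
      apply measurable_const.max
      exact ((measurable_pi_apply i).comp measurable_fst).mul
        ((measurable_from_bool (fun sb : Fin m → Bool => sgn (sb i))).comp measurable_snd)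
  have hcardN : Fintype.card (Fin m → Bool) = 2^m := by
    rw [Fintype.card_fun, Fintype.card_bool, Fintype.card_fin]
  have hUval : ∀ s : Fin m → Bool,
      ((PMF.uniformOfFintype (Fin m → Bool)).toMeasure) {s} = ((2:ENNReal)^m)⁻¹ := by
    intro s
    rw [PMF.toMeasure_apply_singleton _ s (measurableSet_all {s}), PMF.uniformOfFintype_apply,
      hcardN]
    norm_num
  have hbind : (((PMF.uniformOfFintype (Fin m → Bool)).toMeasure).bind
      (fun s => (M s).map (fun t => (t, s)))) E'
      = ∑ s : Fin m → Bool, (M s) (As s) * ((2:ENNReal)^m)⁻¹ := by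
    rw [Measure.bind_apply hE'meas (measurable_from_bool _).aemeasurable, lintegral_fintype]
    apply Finset.sum_congr rfl
    intro s _
    have hememb : Measurable (fun t : Fin m → ℝ => (t, s)) :=
      measurable_id.prodMk measurable_const
    rw [Measure.map_apply hememb hE'meas, hUval s]
    rfl
  rw [hbind, ENNReal.toReal_sum (fun s _ => ENNReal.mul_ne_top (measure_ne_top _ _)
    (by simp))]
  have htoReal : ∀ s : Fin m → Bool, ((M s) (As s) * ((2:ENNReal)^m)⁻¹).toReal
      = ((M s) (As s)).toReal * ((2:ℝ)^m)⁻¹ := by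
    intro s
    rw [ENNReal.toReal_mul]
    congr 1
    simp
  rw [Finset.sum_congr rfl (fun s _ => htoReal s)]
  have hHyb0 : Hyb M qb γ τ 0 = ∑ s : Fin m → Bool,
      ((2:ℝ)^m)⁻¹ * ∫ t, phi qb γ τ t (scoreH 0 t s s) ∂(M s) := by
    rw [Hyb]
    apply Finset.sum_congr rfl
    intro s _
    have h1 : ∀ sh : Fin m → Bool,
        ((2:ℝ)^m)⁻¹ * bernVecPr qb sh * ∫ t, phi qb γ τ t (scoreH 0 t s sh) ∂(M s)
        = bernVecPr qb sh * (((2:ℝ)^m)⁻¹ * ∫ t, phi qb γ τ t (scoreH 0 t s s) ∂(M s)) := by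
      intro sh
      have : (∫ t, phi qb γ τ t (scoreH 0 t s sh) ∂(M s))
          = ∫ t, phi qb γ τ t (scoreH 0 t s s) ∂(M s) := by
        apply integral_congr_ae; apply ae_of_all; intro t
        simp only [scoreH_zero t s sh s]
      rw [this]; ring
    rw [Finset.sum_congr rfl (fun sh _ => h1 sh), ← Finset.sum_mul, sum_bernVecPr, one_mul]
  rw [hHyb0]
  apply Finset.sum_le_sum
  intro s _
  rw [mul_comm]
  apply mul_le_mul_of_nonneg_left _ (by positivity)
  rw [← measureReal_def, ← integral_indicator_one (hAsmeas s)]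
  apply integral_mono ((integrable_const (1:ℝ)).indicator (hAsmeas s))
  · exact integrable_of_bdd (measurable_phi_comp (measurable_scoreH 0 s s))
      (fun t => phi_nonneg t _) (fun t => phi_le_one t _)
  · intro t
    by_cases ht : t ∈ As s
    · have hX : qfun qb γ t + τ ≤ scoreH 0 t s s := le_trans ht (X_le_score0 t s)
      have h1 : phi qb γ τ t (scoreH 0 t s s) = 1 := phi_eq_one hτ t hX
      simp [Set.indicator_of_mem ht, h1]
    · simp [Set.indicator_of_notMem ht, phi_nonneg]

end AuditAux
open AuditAux

/-- **Variant of the main result.** Let `M : {-1,+1}^m → [-1,+1]^m` be `(ε,δ)`-DP, `S` uniform,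
`T = M(S)`. Suppose `g` satisfies `P[∑ᵢ |tᵢ|·Šᵢ ≥ g(t,γ)] ≤ γ` for all `t` and `γ ∈ [0,1]`,
where `Š ~ Bernoulli(eᵉ/(eᵉ+1))^m`. Then for all `γ ∈ [0,1]` and `τ > 0`,
`P[∑ᵢ max{0, Tᵢ·Sᵢ} ≥ g(T,γ) + τ] ≤ γ + 2mδ/τ`. -/
theorem approx_dp_audit_adaptive (m : ℕ) (ε δ : ℝ) (hε : 0 ≤ ε) (hδ0 : 0 ≤ δ) (hδ1 : δ ≤ 1)
    (M : (Fin m → Bool) → Measure (Fin m → ℝ))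
    (hMprob : ∀ s, IsProbabilityMeasure (M s)) (hMmeas : Measurable M)
    (hrange : ∀ s, ∀ᵐ t ∂(M s), ∀ i, |t i| ≤ 1)
    (hDP : ApproxDP M ε δ)
    (g : (Fin m → ℝ) → ℝ → ℝ)
    (hg : ∀ t : Fin m → ℝ, (∀ i, |t i| ≤ 1) → ∀ γ : ℝ, 0 ≤ γ → γ ≤ 1 →
      ∑ sh : Fin m → Bool, bernVecPr (exp ε / (exp ε + 1)) sh *
          (if g t γ ≤ ∑ i, (if sh i then |t i| else 0) then 1 else 0) ≤ γ)
    (ρ : Measure ((Fin m → ℝ) × (Fin m → Bool)))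
    (hρ : ρ = ((PMF.uniformOfFintype (Fin m → Bool)).toMeasure).bind
        (fun s => (M s).map (fun t => (t, s))))
    (γ τ : ℝ) (hγ0 : 0 ≤ γ) (hγ1 : γ ≤ 1) (hτ : 0 < τ) :
    (ρ {p : (Fin m → ℝ) × (Fin m → Bool) |
        g p.1 γ + τ ≤ ∑ i, max 0 (p.1 i * sgn (p.2 i))}).toReal
      ≤ γ + 2 * m * δ / τ := by
  classical
  have hE : (0:ℝ) < exp ε := exp_pos ε
  have hE1 : (0:ℝ) < exp ε + 1 := by linarith
  set qb : ℝ := exp ε / (exp ε + 1) with hqb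
  have hqb0 : 0 ≤ qb := by rw [hqb]; positivity
  have hqb1 : qb ≤ 1 := by rw [hqb, div_le_one hE1]; linarith
  haveI : ∀ s, IsProbabilityMeasure (M s) := hMprob
  -- ρ is a probability measure
  have hρuniv : ρ Set.univ = 1 := by
    rw [hρ, Measure.bind_apply MeasurableSet.univ (measurable_from_bool _).aemeasurable]
    have hmap : ∀ s : Fin m → Bool,
        (Measure.map (fun t : Fin m → ℝ => (t, s)) (M s)) Set.univ = 1 := by
      intro s
      have hememb : Measurable (fun t : Fin m → ℝ => (t, s)) :=
        measurable_id.prodMk measurable_const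
      rw [Measure.map_apply hememb MeasurableSet.univ, Set.preimage_univ, measure_univ]
    simp only [hmap]
    rw [lintegral_one, measure_univ]
  have hρle1 : ∀ S : Set ((Fin m → ℝ) × (Fin m → Bool)), ρ S ≤ 1 := by
    intro S
    rw [← hρuniv]
    exact measure_mono (Set.subset_univ _)
  have hρfin : ∀ S : Set ((Fin m → ℝ) × (Fin m → Bool)), ρ S ≠ ⊤ := by
    intro S
    exact ne_top_of_le_ne_top ENNReal.one_ne_top (hρle1 S)
  have hτδ : (0:ℝ) ≤ 2 * m * δ / τ := by positivity
  by_cases hγbig : 1 ≤ γ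
  · -- trivial case
    have h1 : (ρ {p : (Fin m → ℝ) × (Fin m → Bool) |
        g p.1 γ + τ ≤ ∑ i, max 0 (p.1 i * sgn (p.2 i))}).toReal ≤ 1 := by
      have := ENNReal.toReal_mono ENNReal.one_ne_top (hρle1 {p : (Fin m → ℝ) × (Fin m → Bool) |
        g p.1 γ + τ ≤ ∑ i, max 0 (p.1 i * sgn (p.2 i))})
      simpa using this
    linarith
  push_neg at hγbig
  -- the measurable proxy event
  have hBadmeas : MeasurableSet {p : (Fin m → ℝ) × (Fin m → Bool) | ¬ ∀ i, |p.1 i| ≤ 1} := by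
    have : {p : (Fin m → ℝ) × (Fin m → Bool) | ¬ ∀ i, |p.1 i| ≤ 1}
        = (⋂ i, {p : (Fin m → ℝ) × (Fin m → Bool) | |p.1 i| ≤ 1})ᶜ := by
      ext p; simp
    rw [this]
    exact (MeasurableSet.iInter (fun i => measurableSet_le
      ((measurable_pi_apply i).comp measurable_fst).abs measurable_const)).compl
  have hρBad : ρ {p : (Fin m → ℝ) × (Fin m → Bool) | ¬ ∀ i, |p.1 i| ≤ 1} = 0 := by
    rw [hρ, Measure.bind_apply hBadmeas (measurable_from_bool _).aemeasurable]
    have hmap : ∀ s : Fin m → Bool,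
        (Measure.map (fun t : Fin m → ℝ => (t, s)) (M s))
          {p : (Fin m → ℝ) × (Fin m → Bool) | ¬ ∀ i, |p.1 i| ≤ 1} = 0 := by
      intro s
      have hememb : Measurable (fun t : Fin m → ℝ => (t, s)) :=
        measurable_id.prodMk measurable_const
      rw [Measure.map_apply hememb hBadmeas]
      exact ae_iff.1 (hrange s)
    simp only [hmap]
    simp
  have hsub : {p : (Fin m → ℝ) × (Fin m → Bool) |
        g p.1 γ + τ ≤ ∑ i, max 0 (p.1 i * sgn (p.2 i))}
      ⊆ {p : (Fin m → ℝ) × (Fin m → Bool) |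
          qfun qb γ p.1 + τ ≤ ∑ i, max 0 (p.1 i * sgn (p.2 i))}
        ∪ {p : (Fin m → ℝ) × (Fin m → Bool) | ¬ ∀ i, |p.1 i| ≤ 1} := by
    intro p hp
    by_cases hgood : ∀ i, |p.1 i| ≤ 1
    · left
      have hGsum : ∑ sh : Fin m → Bool, bernVecPr qb sh *
          (if g p.1 γ ≤ dotp p.1 sh then 1 else 0) ≤ γ := by
        simp only [dotp, hqb]
        exact hg p.1 hgood γ hγ0 hγ1
      have hq := qfun_le hqb0 hqb1 hγbig p.1 (g p.1 γ) hGsum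
      have hp' : g p.1 γ + τ ≤ ∑ i, max 0 (p.1 i * sgn (p.2 i)) := hp
      show qfun qb γ p.1 + τ ≤ ∑ i, max 0 (p.1 i * sgn (p.2 i))
      linarith
    · right; exact hgood
  have hmono : ρ {p : (Fin m → ℝ) × (Fin m → Bool) |
        g p.1 γ + τ ≤ ∑ i, max 0 (p.1 i * sgn (p.2 i))}
      ≤ ρ {p : (Fin m → ℝ) × (Fin m → Bool) |
          qfun qb γ p.1 + τ ≤ ∑ i, max 0 (p.1 i * sgn (p.2 i))} := by
    calc ρ _ ≤ ρ (_ ∪ _) := measure_mono hsub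
      _ ≤ ρ {p : (Fin m → ℝ) × (Fin m → Bool) |
            qfun qb γ p.1 + τ ≤ ∑ i, max 0 (p.1 i * sgn (p.2 i))}
          + ρ {p : (Fin m → ℝ) × (Fin m → Bool) | ¬ ∀ i, |p.1 i| ≤ 1} := measure_union_le _ _
      _ = _ := by rw [hρBad, add_zero]
  have h1 : (ρ {p : (Fin m → ℝ) × (Fin m → Bool) |
        g p.1 γ + τ ≤ ∑ i, max 0 (p.1 i * sgn (p.2 i))}).toReal
      ≤ (ρ {p : (Fin m → ℝ) × (Fin m → Bool) |
          qfun qb γ p.1 + τ ≤ ∑ i, max 0 (p.1 i * sgn (p.2 i))}).toReal :=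
    ENNReal.toReal_mono (hρfin _) hmono
  have h2 : (ρ {p : (Fin m → ℝ) × (Fin m → Bool) |
        qfun qb γ p.1 + τ ≤ ∑ i, max 0 (p.1 i * sgn (p.2 i))}).toReal
      ≤ Hyb M qb γ τ 0 := by
    rw [hρ]
    exact hyb_start M hMprob qb γ τ hτ
  have hchain : ∀ j, j ≤ m → Hyb M qb γ τ (m - j) ≤ Hyb M qb γ τ m + (j:ℝ) * (δ/τ) := by
    intro j
    induction j with
    | zero => intro _; simp
    | succ n ih =>
      intro hj
      have hn : n ≤ m := by omega
      have hk : m - (n+1) < m := by omega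
      have hstep := step M hMprob hrange ε δ γ τ hDP hδ0 hτ qb hqb (m - (n+1)) hk
      have heq : m - (n+1) + 1 = m - n := by omega
      rw [heq] at hstep
      have := ih hn
      push_cast
      push_cast at this
      linarith
  have h3 := hchain m le_rfl
  rw [Nat.sub_self] at h3
  have h4 : Hyb M qb γ τ m ≤ γ := hyb_final M hMprob qb γ τ hqb0 hqb1 hγ0 hτ
  have h5 : (m:ℝ) * (δ/τ) ≤ 2 * m * δ / τ := by
    have hm0 : (0:ℝ) ≤ (m:ℝ) * (δ/τ) := by positivity
    have : 2 * (m:ℝ) * δ / τ = 2 * ((m:ℝ) * (δ/τ)) := by ring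
    linarith [this]
  linarith
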